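/- Let A_1, A_2, … be a quasifibonacci sequence of level N and let n be a positive integer with S_n nonempty. Then the relation ≥ on S_n (reflexive-transitive closure of the edge relation) is a partial order, any two elements of S_n have a least upper bound and a greatest lower bound with respect to it, and the resulting lattice is modular (for all x, y, z with x ≤ z, one has x ∨ (y ∧ z) = (x ∨ y) ∧ z). -/

import Mathlib

/-- `A` (with meaningful values at indices `≥ 1`) is a quasifibonacci sequence of level `N`:
the terms are positive, `A (k+N) = A (k+N-1) + ⋯ + A k` for all `k ≥ 1`, and
`A k > A (k-1) + ⋯ + A 1` for all `1 ≤ k ≤ N`. -/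
def QuasiFib (N : ℕ) (A : ℕ → ℕ) : Prop :=
  (∀ i, 1 ≤ i → 0 < A i) ∧
  (∀ k, 1 ≤ k → A (k + N) = ∑ i ∈ Finset.Icc k (k + N - 1), A i) ∧
  (∀ k, 1 ≤ k → k ≤ N → (∑ i ∈ Finset.Icc 1 (k - 1), A i) < A k)

/-- `SRep A n` is the set of partitions of `n` into distinct terms of `A`, encoded as the
finite sets `F` of positive indices with `∑_{i ∈ F} A i = n` (i.e. the 0-1 indicator
sequences of the paper). -/
def SRep (A : ℕ → ℕ) (n : ℕ) : Set (Finset ℕ) :=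
  {F | (∀ i ∈ F, 1 ≤ i) ∧ (∑ i ∈ F, A i) = n}

/-- the length `l(a)`: the largest index `i` with `a_i = 1` (and `0` for the empty set). -/
def len (F : Finset ℕ) : ℕ := F.sup id

/-- The directed edge relation of the digraph `G_n`: `(a,b)` is an edge iff there is a `k ≥ 1`
with `a_{k+N} = 1`, `a_k = ⋯ = a_{k+N-1} = 0`, `b_{k+N} = 0`, `b_k = ⋯ = b_{k+N-1} = 1`, and
`a_t = b_t` for all `t ∉ {k, …, k+N}`. -/
def Edge (N : ℕ) (F G : Finset ℕ) : Prop :=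
  ∃ k, 1 ≤ k ∧ (k + N) ∈ F ∧ (∀ i ∈ Finset.Ico k (k + N), i ∉ F) ∧
    (k + N) ∉ G ∧ (∀ i ∈ Finset.Ico k (k + N), i ∈ G) ∧
    (∀ t, t ∉ Finset.Icc k (k + N) → (t ∈ F ↔ t ∈ G))

/-- The partial order of the poset `P_n`: `a ≥ b` iff `b` is reachable from `a` by a
(possibly empty) directed path of edges. -/
def pge (N : ℕ) : Finset ℕ → Finset ℕ → Prop := Relation.ReflTransGen (Edge N)

/-- `A_{k,0} = A_k + Σ_{1 ≤ i < k-N-1, N∤i} A_{k-N-1-i}`. -/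
def Ak0 (N : ℕ) (A : ℕ → ℕ) (k : ℕ) : ℕ :=
  A k + ∑ i ∈ (Finset.Ico 1 (k - N - 1)).filter (fun i => ¬ N ∣ i), A (k - N - 1 - i)

/-- `A_{k,1} = A_k + Σ_{1 ≤ i < k-N, N∤i} A_{k-N-i}`. -/
def Ak1 (N : ℕ) (A : ℕ → ℕ) (k : ℕ) : ℕ :=
  A k + ∑ i ∈ (Finset.Ico 1 (k - N)).filter (fun i => ¬ N ∣ i), A (k - N - i)

/-- `A_{k,2} = A_k + Σ_{1 ≤ i < k-N+1, N∤i} A_{k-N+1-i}`. -/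
def Ak2 (N : ℕ) (A : ℕ → ℕ) (k : ℕ) : ℕ :=
  A k + ∑ i ∈ (Finset.Ico 1 (k - N + 1)).filter (fun i => ¬ N ∣ i), A (k - N + 1 - i)

/-- `s` is a least upper bound of `a` and `b` inside `S` (w.r.t. `pge N`, where
`pge N x y` means `x ≥ y`). -/
def IsLUBin (N : ℕ) (S : Set (Finset ℕ)) (a b s : Finset ℕ) : Prop :=
  s ∈ S ∧ pge N s a ∧ pge N s b ∧ ∀ c ∈ S, pge N c a → pge N c b → pge N c s

/-- `s` is a greatest lower bound of `a` and `b` inside `S`. -/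
def IsGLBin (N : ℕ) (S : Set (Finset ℕ)) (a b s : Finset ℕ) : Prop :=
  s ∈ S ∧ pge N a s ∧ pge N b s ∧ ∀ c ∈ S, pge N a c → pge N b c → pge N s c
namespace QF

variable {N : ℕ} {A : ℕ → ℕ}

/-! ### Basic facts about quasifibonacci sequences -/

lemma A_pos (hA : QuasiFib N A) {i : ℕ} (hi : 1 ≤ i) : 0 < A i := hA.1 i hi

lemma A_rec (hA : QuasiFib N A) {k : ℕ} (hk : 1 ≤ k) :
    A (k + N) = ∑ i ∈ Finset.Icc k (k + N - 1), A i := hA.2.1 k hk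

lemma A_lt_succ (hN : 2 ≤ N) (hA : QuasiFib N A) {i : ℕ} (hi : 1 ≤ i) : A i < A (i + 1) := by
  rcases le_or_gt (i + 1) N with h | h
  · have h3 := hA.2.2 (i + 1) (by omega) h
    have : A i ≤ ∑ j ∈ Finset.Icc 1 ((i + 1) - 1), A j := by
      apply Finset.single_le_sum (f := A) (fun j _ => Nat.zero_le _)
      simp [Finset.mem_Icc]; omega
    omega
  · -- i ≥ N, write i+1 = (i+1-N) + N
    have hk : 1 ≤ i + 1 - N := by omega
    have := A_rec hA hk
    rw [show i + 1 - N + N = i + 1 by omega] at this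
    have hmem : i ∈ Finset.Icc (i + 1 - N) (i + 1 - 1) := by simp [Finset.mem_Icc]; omega
    have hmem2 : (i + 1 - N) ∈ Finset.Icc (i + 1 - N) (i + 1 - 1) := by
      simp [Finset.mem_Icc]; omega
    have hsum : A i + A (i + 1 - N) ≤ ∑ j ∈ Finset.Icc (i + 1 - N) (i + 1 - 1), A j := by
      have hne : i ≠ i + 1 - N := by omega
      have := Finset.add_sum_erase _ A hmem2
      have h2 : A i ≤ ∑ j ∈ (Finset.Icc (i + 1 - N) (i + 1 - 1)).erase (i + 1 - N), A j := by
        apply Finset.single_le_sum (f := A) (fun j _ => Nat.zero_le _)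
        simp [Finset.mem_erase, Finset.mem_Icc]; omega
      omega
    have hpos := A_pos hA hk
    omega

lemma A_mono (hN : 2 ≤ N) (hA : QuasiFib N A) {i j : ℕ} (hi : 1 ≤ i) (hij : i ≤ j) :
    A i ≤ A j := by
  induction j with
  | zero => omega
  | succ j ih =>
    rcases Nat.lt_or_ge i (j + 1) with h | h
    · have h1 := ih (by omega)
      have h2 := A_lt_succ hN hA (show 1 ≤ j by omega)
      omega
    · have : i = j + 1 := by omega
      subst this; rfl

lemma A_strict_mono (hN : 2 ≤ N) (hA : QuasiFib N A) {i j : ℕ} (hi : 1 ≤ i) (hij : i < j) :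
    A i < A j := by
  have h1 := A_lt_succ hN hA hi
  have h2 := A_mono hN hA (show 1 ≤ i + 1 by omega) (show i + 1 ≤ j by omega)
  omega

end QF
namespace QF

variable {N : ℕ}

/-! ### The firing system -/

/-- down-move enabled -/
def En (N : ℕ) (x : Finset ℕ) (k : ℕ) : Prop :=
  1 ≤ k ∧ k + N ∈ x ∧ ∀ i ∈ Finset.Ico k (k + N), i ∉ x

/-- down-move -/
def fire (N : ℕ) (x : Finset ℕ) (k : ℕ) : Finset ℕ :=
  (x.erase (k + N)) ∪ Finset.Ico k (k + N)

/-- up-move (merge) enabled -/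
def EnU (N : ℕ) (x : Finset ℕ) (k : ℕ) : Prop :=
  1 ≤ k ∧ k + N ∉ x ∧ ∀ i ∈ Finset.Ico k (k + N), i ∈ x

/-- up-move -/
def unfire (N : ℕ) (x : Finset ℕ) (k : ℕ) : Finset ℕ :=
  (x \ Finset.Ico k (k + N)) ∪ {k + N}

lemma mem_fire {x : Finset ℕ} {k p : ℕ} :
    p ∈ fire N x k ↔ ((p ∈ x ∧ p ≠ k + N) ∨ (k ≤ p ∧ p < k + N)) := by
  simp [fire, Finset.mem_union, Finset.mem_erase, Finset.mem_Ico, and_comm]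

lemma mem_unfire {x : Finset ℕ} {k p : ℕ} :
    p ∈ unfire N x k ↔ ((p ∈ x ∧ ¬(k ≤ p ∧ p < k + N)) ∨ p = k + N) := by
  simp [unfire, Finset.mem_union, Finset.mem_sdiff, Finset.mem_Ico]
  exact or_comm

lemma edge_iff {x y : Finset ℕ} :
    Edge N x y ↔ ∃ k, En N x k ∧ y = fire N x k := by
  constructor
  · rintro ⟨k, hk1, hkN, hempty, hyN, hyin, hagree⟩
    refine ⟨k, ⟨hk1, hkN, fun i hi => hempty i hi⟩, ?_⟩
    ext p
    rw [mem_fire]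
    rcases Nat.lt_or_ge p k with h | h
    · have := hagree p (by simp [Finset.mem_Icc]; omega)
      constructor
      · intro hp; left; exact ⟨(this.mpr hp), by omega⟩
      · rintro (⟨hp, _⟩ | ⟨h1, _⟩); exact this.mp hp; omega
    · rcases Nat.lt_or_ge p (k + N) with h2 | h2
      · have : p ∈ y := hyin p (by simp [Finset.mem_Ico]; omega)
        constructor
        · intro _; right; omega
        · intro _; exact this
      · rcases Nat.eq_or_lt_of_le h2 with h3 | h3
        · constructor
          · intro hp; exact absurd hp (h3 ▸ hyN)
          · rintro (⟨hp, hne⟩ | ⟨_, _⟩)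
            · exact absurd h3.symm hne
            · omega
        · have := hagree p (by simp [Finset.mem_Icc]; omega)
          constructor
          · intro hp; left; exact ⟨this.mpr hp, by omega⟩
          · rintro (⟨hp, _⟩ | ⟨_, _⟩); exact this.mp hp; omega
  · rintro ⟨k, ⟨hk1, hkN, hempty⟩, rfl⟩
    refine ⟨k, hk1, hkN, hempty, ?_, ?_, ?_⟩
    · rw [mem_fire]; rintro (⟨_, h⟩ | ⟨_, h⟩) <;> omega
    · intro i hi; rw [mem_fire]; right; simpa [Finset.mem_Ico] using hi
    · intro t ht
      simp only [Finset.mem_Icc, not_and_or, not_le] at ht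
      rw [mem_fire]
      constructor
      · intro h; left; exact ⟨h, by omega⟩
      · rintro (⟨h, _⟩ | ⟨h1, h2⟩); exact h; omega

/-- two simultaneously enabled down-moves are far apart -/
lemma en_disjoint {x : Finset ℕ} {k k' : ℕ} (h : En N x k) (h' : En N x k') (hne : k ≠ k') :
    k + N < k' ∨ k' + N < k := by
  rcases Nat.lt_or_ge k k' with hlt | hge
  · left
    by_contra hcon
    push_neg at hcon
    exact (h'.2.2 (k + N) (by simp [Finset.mem_Ico]; omega)) h.2.1
  · right
    by_contra hcon
    push_neg at hcon
    have hlt : k' < k := by omega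
    exact (h.2.2 (k' + N) (by simp [Finset.mem_Ico]; omega)) h'.2.1

lemma enU_disjoint {x : Finset ℕ} {k k' : ℕ} (h : EnU N x k) (h' : EnU N x k') (hne : k ≠ k') :
    k + N < k' ∨ k' + N < k := by
  rcases Nat.lt_or_ge k k' with hlt | hge
  · left
    by_contra hcon
    push_neg at hcon
    exact h.2.1 (h'.2.2 (k + N) (by simp [Finset.mem_Ico]; omega))
  · right
    by_contra hcon
    push_neg at hcon
    have hlt : k' < k := by omega
    exact h'.2.1 (h.2.2 (k' + N) (by simp [Finset.mem_Ico]; omega))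

/-- persistence for down-moves -/
lemma en_persist {x : Finset ℕ} {k k' : ℕ} (h : En N x k) (h' : En N x k') (hne : k ≠ k') :
    En N (fire N x k') k := by
  have hd := en_disjoint h h' hne
  refine ⟨h.1, ?_, ?_⟩
  · rw [mem_fire]; left; exact ⟨h.2.1, by omega⟩
  · intro i hi
    simp only [Finset.mem_Ico] at hi
    rw [mem_fire]
    rintro (⟨hin, _⟩ | ⟨h1, h2⟩)
    · exact h.2.2 i (by simp [Finset.mem_Ico]; omega) hin
    · omega

lemma enU_persist {x : Finset ℕ} {k k' : ℕ} (h : EnU N x k) (h' : EnU N x k') (hne : k ≠ k') :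
    EnU N (unfire N x k') k := by
  have hd := enU_disjoint h h' hne
  refine ⟨h.1, ?_, ?_⟩
  · rw [mem_unfire]; rintro (⟨hin, _⟩ | heq)
    · exact h.2.1 hin
    · omega
  · intro i hi
    simp only [Finset.mem_Ico] at hi
    rw [mem_unfire]
    left
    exact ⟨h.2.2 i (by simp [Finset.mem_Ico]; omega), by omega⟩

/-- commutation for down-moves -/
lemma fire_comm {x : Finset ℕ} {k k' : ℕ} (h : En N x k) (h' : En N x k') (hne : k ≠ k') :
    fire N (fire N x k) k' = fire N (fire N x k') k := by
  have hd := en_disjoint h h' hne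
  ext p
  simp only [mem_fire]
  constructor
  · rintro (⟨(⟨hp, h1⟩ | ⟨h1, h2⟩), h3⟩ | ⟨h1, h2⟩)
    · exact Or.inl ⟨Or.inl ⟨hp, h3⟩, h1⟩
    · exact Or.inr ⟨h1, h2⟩
    · exact Or.inl ⟨Or.inr ⟨h1, h2⟩, by omega⟩
  · rintro (⟨(⟨hp, h1⟩ | ⟨h1, h2⟩), h3⟩ | ⟨h1, h2⟩)
    · exact Or.inl ⟨Or.inl ⟨hp, h3⟩, h1⟩
    · exact Or.inr ⟨h1, h2⟩
    · exact Or.inl ⟨Or.inr ⟨h1, h2⟩, by omega⟩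

lemma unfire_comm {x : Finset ℕ} {k k' : ℕ} (h : EnU N x k) (h' : EnU N x k') (hne : k ≠ k') :
    unfire N (unfire N x k) k' = unfire N (unfire N x k') k := by
  have hd := enU_disjoint h h' hne
  ext p
  simp only [mem_unfire]
  constructor
  · rintro (⟨(⟨hp, h1⟩ | heq), h3⟩ | heq)
    · exact Or.inl ⟨Or.inl ⟨hp, h3⟩, h1⟩
    · exact Or.inr heq
    · exact Or.inl ⟨Or.inr heq, by omega⟩
  · rintro (⟨(⟨hp, h1⟩ | heq), h3⟩ | heq)
    · exact Or.inl ⟨Or.inl ⟨hp, h3⟩, h1⟩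
    · exact Or.inr heq
    · exact Or.inl ⟨Or.inr heq, by omega⟩

/-- firing and unfiring are inverse -/
lemma enU_fire {x : Finset ℕ} {k : ℕ} (h : En N x k) : EnU N (fire N x k) k := by
  refine ⟨h.1, ?_, ?_⟩
  · rw [mem_fire]; rintro (⟨_, h1⟩ | ⟨_, _⟩) <;> omega
  · intro i hi; rw [mem_fire]; right; simpa [Finset.mem_Ico] using hi

lemma en_unfire {x : Finset ℕ} {k : ℕ} (h : EnU N x k) : En N (unfire N x k) k := by
  refine ⟨h.1, ?_, ?_⟩
  · rw [mem_unfire]; right; rfl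
  · intro i hi
    simp only [Finset.mem_Ico] at hi
    rw [mem_unfire]
    rintro (⟨_, h1⟩ | heq) <;> omega

lemma unfire_fire {x : Finset ℕ} {k : ℕ} (h : En N x k) : unfire N (fire N x k) k = x := by
  ext p
  rw [mem_unfire, mem_fire]
  constructor
  · rintro (⟨(⟨hp, _⟩ | ⟨h1, h2⟩), h3⟩ | heq)
    · exact hp
    · omega
    · subst heq; exact h.2.1
  · intro hp
    rcases Nat.decEq p (k + N) with h1 | h1
    · rcases em (k ≤ p ∧ p < k + N) with h2 | h2
      · exact absurd hp (h.2.2 p (by simp [Finset.mem_Ico]; omega))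
      · exact Or.inl ⟨Or.inl ⟨hp, h1⟩, h2⟩
    · exact Or.inr h1

lemma fire_unfire {x : Finset ℕ} {k : ℕ} (h : EnU N x k) : fire N (unfire N x k) k = x := by
  ext p
  rw [mem_fire, mem_unfire]
  constructor
  · rintro (⟨(⟨hp, _⟩ | heq), h3⟩ | ⟨h1, h2⟩)
    · exact hp
    · omega
    · exact h.2.2 p (by simp [Finset.mem_Ico]; omega)
  · intro hp
    rcases em (k ≤ p ∧ p < k + N) with h2 | h2
    · exact Or.inr h2
    · have : p ≠ k + N := fun heq => h.2.1 (heq ▸ hp)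
      exact Or.inl ⟨Or.inl ⟨hp, h2⟩, this⟩

end QF
namespace QF

/-! ### Abstract abelian rewriting machinery -/

section Abstract

variable (en : Finset ℕ → ℕ → Prop) (f : Finset ℕ → ℕ → Finset ℕ)

/-- legal firing sequences -/
inductive Fires : Finset ℕ → List ℕ → Finset ℕ → Prop
  | nil (x : Finset ℕ) : Fires x [] x
  | cons {x : Finset ℕ} {k : ℕ} {l : List ℕ} {y : Finset ℕ} :
      en x k → Fires (f x k) l y → Fires x (k :: l) y

variable {en f}

lemma Fires.append {x y z : Finset ℕ} {l l' : List ℕ}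
    (h : Fires en f x l y) (h' : Fires en f y l' z) : Fires en f x (l ++ l') z := by
  induction h with
  | nil => simpa using h'
  | cons hk _ ih => exact Fires.cons hk (ih h')

section Hyps

variable (H1 : ∀ {x : Finset ℕ} {k k' : ℕ}, en x k → en x k' → k ≠ k' → en (f x k') k)
variable (H2 : ∀ {x : Finset ℕ} {k k' : ℕ},
  en x k → en x k' → k ≠ k' → f (f x k) k' = f (f x k') k)

include H1 in
lemma Fires.persist {l : List ℕ} : ∀ {x y : Finset ℕ} {k : ℕ},
    Fires en f x l y → en x k → k ∉ l → en y k := by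
  induction l with
  | nil => intro x y k h hk _; cases h; exact hk
  | cons a t ih =>
    intro x y k h hk hnotin
    simp only [List.mem_cons, not_or] at hnotin
    cases h with
    | cons ha hrest => exact ih hrest (H1 hk ha hnotin.1) hnotin.2

include H1 H2 in
lemma Fires.lift {l : List ℕ} : ∀ {x y : Finset ℕ} {k : ℕ},
    Fires en f x l y → en x k → k ∉ l → Fires en f (f x k) l (f y k) := by
  induction l with
  | nil => intro x y k h _ _; cases h; exact Fires.nil _
  | cons a t ih =>
    intro x y k h hk hnotin
    simp only [List.mem_cons, not_or] at hnotin
    cases h with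
    | cons ha hrest =>
      have hen : en (f x k) a := H1 ha hk (Ne.symm hnotin.1)
      have hrec := ih hrest (H1 hk ha hnotin.1) hnotin.2
      rw [← H2 hk ha hnotin.1] at hrec
      exact Fires.cons hen hrec

include H1 H2 in
lemma Fires.behead {l : List ℕ} : ∀ {x y : Finset ℕ} {k : ℕ},
    Fires en f x l y → en x k → k ∈ l → Fires en f x (k :: l.erase k) y := by
  induction l with
  | nil => intro x y k _ _ hmem; simp at hmem
  | cons a t ih =>
    intro x y k h hk hmem
    cases h with
    | cons ha hrest =>
      by_cases heq : a = k
      · subst heq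
        rw [List.erase_cons_head]
        exact Fires.cons ha hrest
      · have hne : k ≠ a := fun h => heq h.symm
        have hmem' : k ∈ t := by
          rcases List.mem_cons.mp hmem with h | h
          · exact absurd h.symm heq
          · exact h
        have ih' := ih hrest (H1 hk ha hne) hmem'
        cases ih' with
        | cons hk2 hrest2 =>
          rw [← H2 hk ha hne] at hrest2
          have hena : en (f x k) a := H1 ha hk heq
          have hres : Fires en f x (k :: a :: t.erase k) y :=
            Fires.cons hk (Fires.cons hena hrest2)
          have herase : (a :: t).erase k = a :: t.erase k := by
            simp [List.erase_cons, heq]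
          rw [herase]
          exact hres

include H1 H2 in
lemma Fires.counts_determine {l : List ℕ} : ∀ {x y z : Finset ℕ} {l' : List ℕ},
    Fires en f x l y → Fires en f x l' z →
    (∀ k, l.count k = l'.count k) → y = z := by
  induction l with
  | nil =>
    intro x y z l' h h' hc
    have : l' = [] := by
      cases l' with
      | nil => rfl
      | cons a t =>
        have := hc a
        simp [List.count_cons] at this
    subst this
    cases h; cases h'; rfl
  | cons k t ih =>
    intro x y z l' h h' hc
    cases h with
    | cons hk hrest =>
      have hmem : k ∈ l' := by
        have := hc k
        simp [List.count_cons] at this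
        exact List.count_pos_iff.mp (by omega)
      have h'' := Fires.behead H1 H2 h' hk hmem
      cases h'' with
      | cons hk2 hrest2 =>
        apply ih hrest hrest2
        intro k'
        have := hc k'
        by_cases heq : k' = k
        · subst heq
          rw [List.count_erase_self]
          simp [List.count_cons] at this ⊢
          omega
        · rw [List.count_erase_of_ne heq (l := l')]
          simpa [List.count_cons, heq, Ne.symm heq] using this

include H1 H2 in
lemma Fires.exchange {β : List ℕ} : ∀ {x y z : Finset ℕ} {α : List ℕ},
    Fires en f x α y → Fires en f x β z →
    ∃ γ w, Fires en f y γ w ∧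
      ∀ k, α.count k + γ.count k = max (α.count k) (β.count k) := by
  induction β with
  | nil =>
    intro x y z α hα hβ
    refine ⟨[], y, Fires.nil y, fun k => by simp⟩
  | cons k β' ih =>
    intro x y z α hα hβ
    cases hβ with
    | cons hk hrest =>
      by_cases hmem : k ∈ α
      · have hα' := Fires.behead H1 H2 hα hk hmem
        cases hα' with
        | cons hk2 hrest2 =>
          obtain ⟨γ, w, hγ, hcount⟩ := ih hrest2 hrest
          refine ⟨γ, w, hγ, fun k' => ?_⟩
          have hthis := hcount k'
          by_cases heq : k' = k
          · subst heq
            rw [List.count_erase_self] at hthis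
            rw [List.count_cons_self]
            have hpos : 0 < α.count k' := List.count_pos_iff.mpr hmem
            omega
          · rw [List.count_erase_of_ne heq] at hthis
            rw [List.count_cons_of_ne (Ne.symm heq)]
            exact hthis
      · have hlift := Fires.lift H1 H2 hα hk hmem
        obtain ⟨γ, w, hγ, hcount⟩ := ih hlift hrest
        have hky : en y k := Fires.persist H1 hα hk hmem
        refine ⟨k :: γ, w, Fires.cons hky hγ, fun k' => ?_⟩
        have hthis := hcount k'
        by_cases heq : k' = k
        · subst heq
          have hz : α.count k' = 0 := by
            rw [List.count_eq_zero]; exact hmem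
          rw [List.count_cons_self, List.count_cons_self]
          omega
        · rw [List.count_cons_of_ne (Ne.symm heq), List.count_cons_of_ne (Ne.symm heq)]
          exact hthis

end Hyps

end Abstract

end QF
namespace QF

variable {N : ℕ} {A : ℕ → ℕ} {n : ℕ}

/-! ### Instantiation of the abstract machinery -/

abbrev FiresD (N : ℕ) : Finset ℕ → List ℕ → Finset ℕ → Prop := Fires (En N) (fire N)
abbrev FiresU (N : ℕ) : Finset ℕ → List ℕ → Finset ℕ → Prop := Fires (EnU N) (unfire N)

lemma firesD_reverse {x y : Finset ℕ} {l : List ℕ} (h : FiresD N x l y) :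
    FiresU N y l.reverse x := by
  induction h with
  | nil => exact Fires.nil _
  | cons hk hrest ih =>
    rename_i x' k' l' y'
    rw [List.reverse_cons]
    refine Fires.append ih ?_
    have h1 : EnU N (fire N x' k') k' := enU_fire hk
    have h2 : unfire N (fire N x' k') k' = x' := unfire_fire hk
    exact Fires.cons h1 (by rw [h2]; exact Fires.nil _)

lemma firesU_reverse {x y : Finset ℕ} {l : List ℕ} (h : FiresU N x l y) :
    FiresD N y l.reverse x := by
  induction h with
  | nil => exact Fires.nil _
  | cons hk hrest ih =>
    rename_i x' k' l' y'
    rw [List.reverse_cons]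
    refine Fires.append ih ?_
    have h1 : En N (unfire N x' k') k' := en_unfire hk
    have h2 : fire N (unfire N x' k') k' = x' := fire_unfire hk
    exact Fires.cons h1 (by rw [h2]; exact Fires.nil _)

lemma pge_iff {x y : Finset ℕ} : pge N x y ↔ ∃ l, FiresD N x l y := by
  constructor
  · intro h
    induction h with
    | refl => exact ⟨[], Fires.nil _⟩
    | tail hxb hby ih =>
      obtain ⟨l, hl⟩ := ih
      obtain ⟨k, hk, rfl⟩ := edge_iff.mp hby
      exact ⟨l ++ [k], Fires.append hl (Fires.cons hk (Fires.nil _))⟩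
  · rintro ⟨l, hl⟩
    induction hl with
    | nil => exact Relation.ReflTransGen.refl
    | cons hk _ ih =>
      exact Relation.ReflTransGen.head (edge_iff.mpr ⟨_, hk, rfl⟩) ih

/-! ### Preservation of `SRep` and cardinality -/

lemma Ico_eq_Icc (hN : 1 ≤ N) (k : ℕ) : Finset.Ico k (k + N) = Finset.Icc k (k + N - 1) := by
  rw [← Finset.Ico_add_one_right_eq_Icc]
  congr 1
  omega

lemma sum_Ico_eq (hA : QuasiFib N A) (hN : 1 ≤ N) {k : ℕ} (hk : 1 ≤ k) :
    ∑ i ∈ Finset.Ico k (k + N), A i = A (k + N) := by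
  rw [Ico_eq_Icc hN, ← A_rec hA hk]

lemma fire_srep (hA : QuasiFib N A) (hN : 1 ≤ N) {x : Finset ℕ} {k : ℕ}
    (hx : x ∈ SRep A n) (hk : En N x k) : fire N x k ∈ SRep A n := by
  obtain ⟨hpos, hsum⟩ := hx
  constructor
  · intro i hi
    rw [mem_fire] at hi
    rcases hi with ⟨h, _⟩ | ⟨h, _⟩
    · exact hpos i h
    · have := hk.1; omega
  · have hdisj : Disjoint (x.erase (k + N)) (Finset.Ico k (k + N)) := by
      rw [Finset.disjoint_right]
      intro i hi
      simp only [Finset.mem_erase, not_and]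
      intro _
      exact hk.2.2 i hi
    rw [fire, Finset.sum_union hdisj, sum_Ico_eq hA hN hk.1,
      Finset.sum_erase_add _ _ hk.2.1]
    exact hsum

lemma unfire_srep (hA : QuasiFib N A) (hN : 1 ≤ N) {x : Finset ℕ} {k : ℕ}
    (hx : x ∈ SRep A n) (hk : EnU N x k) : unfire N x k ∈ SRep A n := by
  obtain ⟨hpos, hsum⟩ := hx
  constructor
  · intro i hi
    rw [mem_unfire] at hi
    rcases hi with ⟨h, _⟩ | h
    · exact hpos i h
    · have := hk.1; omega
  · have hsub : Finset.Ico k (k + N) ⊆ x := fun i hi => hk.2.2 i hi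
    have hnotmem : k + N ∉ x \ Finset.Ico k (k + N) := by
      simp only [Finset.mem_sdiff, not_and]
      intro h; exact absurd h hk.2.1
    rw [unfire, Finset.union_comm, ← Finset.insert_eq, Finset.sum_insert hnotmem]
    have hsplit := Finset.sum_sdiff (f := A) hsub
    rw [sum_Ico_eq hA hN hk.1] at hsplit
    omega

lemma firesD_srep (hA : QuasiFib N A) (hN : 1 ≤ N) {x y : Finset ℕ} {l : List ℕ}
    (hx : x ∈ SRep A n) (h : FiresD N x l y) : y ∈ SRep A n := by
  induction h with
  | nil => exact hx
  | cons hk _ ih => exact ih (fire_srep hA hN hx hk)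

lemma firesU_srep (hA : QuasiFib N A) (hN : 1 ≤ N) {x y : Finset ℕ} {l : List ℕ}
    (hx : x ∈ SRep A n) (h : FiresU N x l y) : y ∈ SRep A n := by
  induction h with
  | nil => exact hx
  | cons hk _ ih => exact ih (unfire_srep hA hN hx hk)

lemma card_fire {x : Finset ℕ} {k : ℕ} (hk : En N x k) :
    (fire N x k).card = x.card - 1 + N := by
  have hdisj : Disjoint (x.erase (k + N)) (Finset.Ico k (k + N)) := by
    rw [Finset.disjoint_right]
    intro i hi
    simp only [Finset.mem_erase, not_and]
    intro _
    exact hk.2.2 i hi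
  rw [fire, Finset.card_union_of_disjoint hdisj, Finset.card_erase_of_mem hk.2.1,
    Nat.card_Ico]
  omega

lemma card_unfire {x : Finset ℕ} {k : ℕ} (hk : EnU N x k) :
    (unfire N x k).card = x.card - N + 1 := by
  have hsub : Finset.Ico k (k + N) ⊆ x := fun i hi => hk.2.2 i hi
  have hnotmem : k + N ∉ x \ Finset.Ico k (k + N) := by
    simp only [Finset.mem_sdiff, not_and]
    intro h; exact absurd h hk.2.1
  rw [unfire, Finset.union_comm, ← Finset.insert_eq, Finset.card_insert_of_notMem hnotmem,
    Finset.card_sdiff_of_subset hsub, Nat.card_Ico]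
  omega

lemma card_le_of_srep (hA : QuasiFib N A) {x : Finset ℕ} (hx : x ∈ SRep A n) :
    x.card ≤ n := by
  obtain ⟨hpos, hsum⟩ := hx
  calc x.card = ∑ _i ∈ x, 1 := by simp
  _ ≤ ∑ i ∈ x, A i := Finset.sum_le_sum (fun i hi => A_pos hA (hpos i hi))
  _ = n := hsum

end QF
namespace QF

variable {N : ℕ}

/-! ### counts of a firing sequence are determined by the endpoints -/

/-- indicator function -/
def chi (x : Finset ℕ) (p : ℕ) : ℤ := if p ∈ x then 1 else 0

/-- weight of the move at `k` on position `p` -/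
def wt (N k p : ℕ) : ℤ :=
  (if k ≤ p ∧ p < k + N then 1 else 0) - (if p = k + N then 1 else 0)

lemma chi_fire {x : Finset ℕ} {k : ℕ} (hk : En N x k) (p : ℕ) :
    chi (fire N x k) p = chi x p + wt N k p := by
  have hmem := @mem_fire N x k p
  unfold chi wt
  by_cases h1 : k ≤ p ∧ p < k + N
  · rw [if_pos (hmem.mpr (Or.inr h1)), if_pos h1,
      if_neg (show ¬ p = k + N by omega),
      if_neg (fun hp => hk.2.2 p (by simp [Finset.mem_Ico]; omega) hp)]
    ring
  · by_cases h2 : p = k + N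
    · subst h2
      rw [if_neg h1, if_pos rfl, if_pos hk.2.1, if_neg]
      · ring
      · rw [hmem]
        rintro (⟨_, hne⟩ | hr)
        · exact hne rfl
        · exact h1 hr
    · have hiff : (p ∈ fire N x k) ↔ p ∈ x := by
        rw [hmem]
        constructor
        · rintro (⟨h, _⟩ | hr)
          · exact h
          · exact absurd hr h1
        · intro h; exact Or.inl ⟨h, h2⟩
      rw [if_neg h1, if_neg h2]
      by_cases hin : p ∈ x
      · rw [if_pos (hiff.mpr hin), if_pos hin]; ring
      · rw [if_neg (fun hh => hin (hiff.mp hh)), if_neg hin]; ring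

lemma chi_fires {x y : Finset ℕ} {l : List ℕ} (h : FiresD N x l y) (p : ℕ) :
    chi y p = chi x p + (l.map (fun k => wt N k p)).sum := by
  induction h with
  | nil => simp
  | cons hk _ ih =>
    rename_i x' k' l' y'
    rw [List.map_cons, List.sum_cons, ih, chi_fire hk]
    ring

lemma chi_inj {x y : Finset ℕ} (h : ∀ p, chi x p = chi y p) : x = y := by
  ext p
  have := h p
  unfold chi at this
  by_cases hx : p ∈ x <;> by_cases hy : p ∈ y <;> simp [hx, hy] at this ⊢

/-- counting a window via `count` -/
lemma countP_window (l : List ℕ) (j : ℕ) :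
    l.countP (fun k => decide (k ≤ j + N ∧ j + N < k + N)) =
      ∑ i ∈ Finset.Ico (j + 1) (j + N + 1), l.count i := by
  induction l with
  | nil => simp
  | cons a t ih =>
    rw [List.countP_cons]
    have hcount : ∀ i, (a :: t).count i = t.count i + if a = i then 1 else 0 := by
      intro i
      rw [List.count_cons]
      by_cases h : a = i
      · subst h; simp
      · have hbe : (i == a) = false := by
          simp only [beq_eq_false_iff_ne, ne_eq]
          omega
        simp [h, hbe]
    rw [Finset.sum_congr rfl (fun i _ => hcount i), Finset.sum_add_distrib, ← ih,
      Finset.sum_ite_eq]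
    simp only [decide_eq_true_eq]
    by_cases h : j < a ∧ a ≤ j + N
    · rw [if_pos (show a ≤ j + N ∧ j + N < a + N by omega),
        if_pos (show a ∈ Finset.Ico (j + 1) (j + N + 1) by simp only [Finset.mem_Ico]; omega)]
    · rw [if_neg (show ¬(a ≤ j + N ∧ j + N < a + N) by omega),
        if_neg (show a ∉ Finset.Ico (j + 1) (j + N + 1) by simp only [Finset.mem_Ico]; omega)]

lemma countP_killer (l : List ℕ) (j : ℕ) :
    l.countP (fun k => decide (j + N = k + N)) = l.count j := by
  rw [List.count]
  apply List.countP_congr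
  intro a _
  rcases eq_or_ne a j with h | h
  · subst h; simp
  · have h2 : ¬ (j + N = a + N) := by omega
    simp [h, h2, Ne.symm h]

lemma wtsum (l : List ℕ) (p : ℕ) :
    (l.map (fun k => wt N k p)).sum =
      (l.countP (fun k => decide (k ≤ p ∧ p < k + N)) : ℤ) -
        (l.countP (fun k => decide (p = k + N)) : ℤ) := by
  induction l with
  | nil => simp
  | cons a t ih =>
    rw [List.map_cons, List.sum_cons, ih, List.countP_cons, List.countP_cons]
    unfold wt
    push_cast [apply_ite (fun (m : ℕ) => (m : ℤ))]
    simp only [decide_eq_true_eq]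
    by_cases h1 : a ≤ p ∧ p < a + N <;> by_cases h2 : p = a + N <;>
      simp [h1, h2] <;> ring

lemma list_bounded (l : List ℕ) : ∀ k ∈ l, k < l.foldr max 0 + 1 := by
  induction l with
  | nil => simp
  | cons a t ih =>
    intro k hk
    have hfold : (a :: t).foldr max 0 = max a (t.foldr max 0) := rfl
    rcases List.mem_cons.mp hk with h | h
    · subst h; rw [hfold]; omega
    · have := ih k h; rw [hfold]; omega

/-- independence: two firing sequences with the same endpoints have the same counts -/
lemma counts_independent {x y : Finset ℕ} {l1 l2 : List ℕ}
    (h1 : FiresD N x l1 y) (h2 : FiresD N x l2 y) :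
    ∀ j, l1.count j = l2.count j := by
  have hsum : ∀ p, (l1.map (fun k => wt N k p)).sum = (l2.map (fun k => wt N k p)).sum := by
    intro p
    have e1 := chi_fires h1 p
    have e2 := chi_fires h2 p
    omega
  set B := l1.foldr max 0 + l2.foldr max 0 + 1 with hB
  have hb1 : ∀ k ∈ l1, k < B := by
    intro k hk; have := list_bounded l1 k hk; omega
  have hb2 : ∀ k ∈ l2, k < B := by
    intro k hk; have := list_bounded l2 k hk; omega
  have key : ∀ d j, B ≤ j + d → l1.count j = l2.count j := by
    intro d
    induction d with
    | zero =>
      intro j hj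
      have e1 : l1.count j = 0 := by
        rw [List.count_eq_zero]
        intro hmem
        have := hb1 j hmem; omega
      have e2 : l2.count j = 0 := by
        rw [List.count_eq_zero]
        intro hmem
        have := hb2 j hmem; omega
      omega
    | succ d ih =>
      intro j hj
      have hwin : ∀ i ∈ Finset.Ico (j + 1) (j + N + 1), l1.count i = l2.count i := by
        intro i hi
        simp only [Finset.mem_Ico] at hi
        exact ih i (by omega)
      have hwindow : l1.countP (fun k => decide (k ≤ j + N ∧ j + N < k + N)) =
          l2.countP (fun k => decide (k ≤ j + N ∧ j + N < k + N)) := by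
        rw [countP_window, countP_window]
        exact Finset.sum_congr rfl hwin
      have heq := hsum (j + N)
      rw [wtsum, wtsum] at heq
      have hk1 : l1.countP (fun k => decide (j + N = k + N)) = l1.count j := countP_killer l1 j
      have hk2 : l2.countP (fun k => decide (j + N = k + N)) = l2.count j := countP_killer l2 j
      rw [hk1, hk2] at heq
      rw [hwindow] at heq
      omega
  intro j
  exact key B j (by omega)

end QF
namespace QF

variable {N : ℕ} {A : ℕ → ℕ} {n : ℕ}

/-! ### Zeckendorf uniqueness -/

/-- no `N` consecutive indices -/
def NoNCon (N : ℕ) (a : Finset ℕ) : Prop := ∀ k, 1 ≤ k → ¬ (Finset.Ico k (k + N) ⊆ a)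

lemma noNCon_subset {a b : Finset ℕ} (h : NoNCon N b) (hab : a ⊆ b) : NoNCon N a :=
  fun k hk hsub => h k hk (hsub.trans hab)

/-- an up-irreducible set has no `N` consecutive indices -/
lemma irr_noNCon (hN : 2 ≤ N) {a : Finset ℕ} (hirr : ∀ k, ¬ EnU N a k) : NoNCon N a := by
  intro k0 hk0 hsub0
  set M := a.sup id + 1 with hM
  have hbound : ∀ i ∈ a, i < M := by
    intro i hi
    have : i ≤ a.sup id := Finset.le_sup (f := id) hi
    omega
  have key : ∀ d k, 1 ≤ k → Finset.Ico k (k + N) ⊆ a → M ≤ k + d → False := by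
    intro d
    induction d with
    | zero =>
      intro k hk hsub hMk
      have hmem : k ∈ a := hsub (by simp [Finset.mem_Ico]; omega)
      have := hbound k hmem
      omega
    | succ d ih =>
      intro k hk hsub hMk
      by_cases hmem : k + N ∈ a
      · apply ih (k + 1) (by omega) ?_ (by omega)
        intro i hi
        simp only [Finset.mem_Ico] at hi
        rcases Nat.lt_or_ge i (k + N) with h | h
        · exact hsub (by simp [Finset.mem_Ico]; omega)
        · have : i = k + N := by omega
          exact this ▸ hmem
      · exact hirr k ⟨hk, hmem, fun i hi => hsub hi⟩
  exact key M k0 hk0 hsub0 (by omega)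

lemma zsum_lt (hN : 2 ≤ N) (hA : QuasiFib N A) :
    ∀ m, 1 ≤ m → ∀ F : Finset ℕ, (∀ i ∈ F, 1 ≤ i) → (∀ i ∈ F, i < m) → NoNCon N F →
    ∑ i ∈ F, A i < A m := by
  intro m
  induction m using Nat.strong_induction_on with
  | _ m ih =>
    intro hm F hF1 hFm hz
    rcases le_or_gt m N with hmN | hmN
    · have hsub : F ⊆ Finset.Icc 1 (m - 1) := by
        intro i hi
        simp only [Finset.mem_Icc]
        exact ⟨hF1 i hi, by have := hFm i hi; omega⟩
      calc ∑ i ∈ F, A i ≤ ∑ i ∈ Finset.Icc 1 (m - 1), A i :=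
            Finset.sum_le_sum_of_subset hsub
        _ < A m := hA.2.2 m hm hmN
    · -- m ≥ N + 1
      have h1 : 1 ≤ m - N := by omega
      obtain ⟨j, hjmem, hjnot⟩ := Finset.not_subset.mp (hz (m - N) h1)
      simp only [Finset.mem_Ico] at hjmem
      have hjm : j < m := by omega
      have hj1 : 1 ≤ j := by omega
      set F1 := F.filter (fun i => i < j) with hF1def
      set F2 := F.filter (fun i => ¬ i < j) with hF2def
      have hsplit : ∑ i ∈ F, A i = ∑ i ∈ F1, A i + ∑ i ∈ F2, A i :=
        (Finset.sum_filter_add_sum_filter_not F _ A).symm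
      have hF1lt : ∑ i ∈ F1, A i < A j := by
        apply ih j hjm hj1
        · intro i hi; exact hF1 i (Finset.mem_filter.mp hi).1
        · intro i hi; exact (Finset.mem_filter.mp hi).2
        · exact noNCon_subset hz (Finset.filter_subset _ _)
      have hF2le : ∑ i ∈ F2, A i ≤ ∑ i ∈ Finset.Icc (j + 1) (m - 1), A i := by
        apply Finset.sum_le_sum_of_subset
        intro i hi
        obtain ⟨hiF, hinlt⟩ := Finset.mem_filter.mp hi
        simp only [Finset.mem_Icc]
        have : i ≠ j := fun h => hjnot (h ▸ hiF)
        have := hFm i hiF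
        omega
      have hstep : A j + ∑ i ∈ Finset.Icc (j + 1) (m - 1), A i = ∑ i ∈ Finset.Icc j (m - 1), A i := by
        have hins : Finset.Icc j (m - 1) = insert j (Finset.Icc (j + 1) (m - 1)) := by
          ext i
          simp only [Finset.mem_Icc, Finset.mem_insert]
          omega
        rw [hins, Finset.sum_insert (by simp [Finset.mem_Icc])]
      have hsub2 : Finset.Icc j (m - 1) ⊆ Finset.Icc (m - N) (m - 1) := by
        intro i hi
        simp only [Finset.mem_Icc] at hi ⊢
        omega
      have hAm : ∑ i ∈ Finset.Icc (m - N) (m - 1), A i = A m := by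
        have := A_rec hA h1
        rw [show m - N + N = m by omega] at this
        exact this.symm
      have hmono : ∑ i ∈ Finset.Icc j (m - 1), A i ≤ ∑ i ∈ Finset.Icc (m - N) (m - 1), A i :=
        Finset.sum_le_sum_of_subset hsub2
      omega

lemma sum_pos_nonempty {a : Finset ℕ} (hA : QuasiFib N A) (h1 : ∀ i ∈ a, 1 ≤ i)
    (hs : 0 < ∑ i ∈ a, A i) : a.Nonempty := by
  rcases Finset.eq_empty_or_nonempty a with h | h
  · subst h; simp at hs
  · exact h

lemma zeck_unique (hN : 2 ≤ N) (hA : QuasiFib N A) :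
    ∀ s : ℕ, ∀ a b : Finset ℕ, (∀ i ∈ a, 1 ≤ i) → (∀ i ∈ b, 1 ≤ i) →
      NoNCon N a → NoNCon N b → ∑ i ∈ a, A i = s → ∑ i ∈ b, A i = s → a = b := by
  intro s
  induction s using Nat.strong_induction_on with
  | _ s ih =>
    intro a b ha1 hb1 hza hzb hsa hsb
    rcases Nat.eq_zero_or_pos s with hs | hs
    · subst hs
      have hae : a = ∅ := by
        by_contra h
        obtain ⟨i, hi⟩ := Finset.nonempty_of_ne_empty h
        have h1 := A_pos hA (ha1 i hi)
        have h2 : A i ≤ ∑ j ∈ a, A j := Finset.single_le_sum (fun j _ => Nat.zero_le _) hi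
        omega
      have hbe : b = ∅ := by
        by_contra h
        obtain ⟨i, hi⟩ := Finset.nonempty_of_ne_empty h
        have h1 := A_pos hA (hb1 i hi)
        have h2 : A i ≤ ∑ j ∈ b, A j := Finset.single_le_sum (fun j _ => Nat.zero_le _) hi
        omega
      rw [hae, hbe]
    · have hane : a.Nonempty := sum_pos_nonempty hA ha1 (by omega)
      have hbne : b.Nonempty := sum_pos_nonempty hA hb1 (by omega)
      set p := a.max' hane with hp
      set q := b.max' hbne with hq
      have hmaxle : ∀ (c d : Finset ℕ) (hc : c.Nonempty) (hd : d.Nonempty),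
          (∀ i ∈ c, 1 ≤ i) → (∀ i ∈ d, 1 ≤ i) → NoNCon N d →
          ∑ i ∈ c, A i = s → ∑ i ∈ d, A i = s → c.max' hc ≤ d.max' hd := by
        intro c d hc hd hc1 hd1 hzd hsc hsd
        by_contra hcon
        push_neg at hcon
        have h1 : ∑ i ∈ d, A i < A (d.max' hd + 1) := by
          apply zsum_lt hN hA _ (by omega)
          · exact hd1
          · intro i hi
            have := Finset.le_max' d i hi
            omega
          · exact hzd
        have h2 : A (d.max' hd + 1) ≤ A (c.max' hc) := by
          apply A_mono hN hA
          · omega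
          · omega
        have h3 : A (c.max' hc) ≤ ∑ i ∈ c, A i :=
          Finset.single_le_sum (fun j _ => Nat.zero_le _) (c.max'_mem hc)
        omega
      have hpq : p = q :=
        le_antisymm
          (hmaxle a b hane hbne ha1 hb1 hzb hsa hsb)
          (hmaxle b a hbne hane hb1 ha1 hza hsb hsa)
      have hpa : p ∈ a := a.max'_mem hane
      have hqb : p ∈ b := hpq ▸ b.max'_mem hbne
      have hApos := A_pos hA (ha1 p hpa)
      have hAple : A p ≤ s := hsa ▸ Finset.single_le_sum (fun j _ => Nat.zero_le _) hpa
      have hsa' : ∑ i ∈ a.erase p, A i = s - A p := by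
        have := Finset.sum_erase_add a A hpa
        omega
      have hsb' : ∑ i ∈ b.erase p, A i = s - A p := by
        have := Finset.sum_erase_add b A hqb
        omega
      have herase : a.erase p = b.erase p := by
        apply ih (s - A p) (by omega)
        · intro i hi; exact ha1 i (Finset.mem_of_mem_erase hi)
        · intro i hi; exact hb1 i (Finset.mem_of_mem_erase hi)
        · exact noNCon_subset hza (Finset.erase_subset _ _)
        · exact noNCon_subset hzb (Finset.erase_subset _ _)
        · exact hsa'
        · exact hsb'
      calc a = insert p (a.erase p) := (Finset.insert_erase hpa).symm
        _ = insert p (b.erase p) := by rw [herase]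
        _ = b := Finset.insert_erase hqb

/-! ### normal forms -/

lemma up_nf (hA : QuasiFib N A) (hN : 2 ≤ N) :
    ∀ (c : ℕ) (a : Finset ℕ), a ∈ SRep A n → a.card ≤ c →
    ∃ T l, FiresU N a l T ∧ T ∈ SRep A n ∧ ∀ k, ¬ EnU N T k := by
  intro c
  induction c with
  | zero =>
    intro a ha hcard
    refine ⟨a, [], Fires.nil a, ha, fun k hk => ?_⟩
    have : k ∈ a := hk.2.2 k (by simp [Finset.mem_Ico]; omega)
    have := Finset.card_pos.mpr ⟨k, this⟩
    omega
  | succ c ih =>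
    intro a ha hcard
    by_cases hex : ∃ k, EnU N a k
    · obtain ⟨k, hk⟩ := hex
      have hsub : Finset.Ico k (k + N) ⊆ a := fun i hi => hk.2.2 i hi
      have hNcard : N ≤ a.card := by
        have := Finset.card_le_card hsub
        simpa [Nat.card_Ico] using this
      have hcard' : (unfire N a k).card ≤ c := by
        rw [card_unfire hk]
        omega
      obtain ⟨T, l, hT, hTS, hirr⟩ := ih (unfire N a k) (unfire_srep hA (by omega) ha hk) hcard'
      exact ⟨T, k :: l, Fires.cons hk hT, hTS, hirr⟩
    · push_neg at hex
      exact ⟨a, [], Fires.nil a, ha, hex⟩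

lemma down_nf (hA : QuasiFib N A) (hN : 2 ≤ N) :
    ∀ (c : ℕ) (a : Finset ℕ), a ∈ SRep A n → n - a.card ≤ c →
    ∃ B l, FiresD N a l B ∧ B ∈ SRep A n ∧ ∀ k, ¬ En N B k := by
  intro c
  induction c with
  | zero =>
    intro a ha hcard
    by_cases hex : ∃ k, En N a k
    · obtain ⟨k, hk⟩ := hex
      have h1 : (fire N a k).card = a.card - 1 + N := card_fire hk
      have h2 := card_le_of_srep hA (fire_srep hA (by omega) ha hk)
      have h3 : 1 ≤ a.card := Finset.card_pos.mpr ⟨k + N, hk.2.1⟩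
      omega
    · push_neg at hex
      exact ⟨a, [], Fires.nil a, ha, hex⟩
  | succ c ih =>
    intro a ha hcard
    by_cases hex : ∃ k, En N a k
    · obtain ⟨k, hk⟩ := hex
      have hS' := fire_srep hA (by omega) ha hk
      have h1 : (fire N a k).card = a.card - 1 + N := card_fire hk
      have h2 := card_le_of_srep hA hS'
      have h3 : 1 ≤ a.card := Finset.card_pos.mpr ⟨k + N, hk.2.1⟩
      have hcard' : n - (fire N a k).card ≤ c := by omega
      obtain ⟨B, l, hB, hBS, hirr⟩ := ih (fire N a k) hS' hcard'
      exact ⟨B, k :: l, Fires.cons hk hB, hBS, hirr⟩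
    · push_neg at hex
      exact ⟨a, [], Fires.nil a, ha, hex⟩

end QF
namespace QF

variable {N : ℕ} {A : ℕ → ℕ} {n : ℕ}

/-! ### specializations of the abstract lemmas -/

lemma exchD {x y z : Finset ℕ} {α β : List ℕ} (hα : FiresD N x α y) (hβ : FiresD N x β z) :
    ∃ γ w, FiresD N y γ w ∧ ∀ k, α.count k + γ.count k = max (α.count k) (β.count k) :=
  Fires.exchange (fun h h' hne => en_persist h h' hne)
    (fun h h' hne => fire_comm h h' hne) hα hβ

lemma exchU {x y z : Finset ℕ} {α β : List ℕ} (hα : FiresU N x α y) (hβ : FiresU N x β z) :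
    ∃ γ w, FiresU N y γ w ∧ ∀ k, α.count k + γ.count k = max (α.count k) (β.count k) :=
  Fires.exchange (fun h h' hne => enU_persist h h' hne)
    (fun h h' hne => unfire_comm h h' hne) hα hβ

lemma cdetD {x y z : Finset ℕ} {l l' : List ℕ} (h : FiresD N x l y) (h' : FiresD N x l' z)
    (hc : ∀ k, l.count k = l'.count k) : y = z :=
  Fires.counts_determine (fun h h' hne => en_persist h h' hne)
    (fun h h' hne => fire_comm h h' hne) h h' hc

lemma cdetU {x y z : Finset ℕ} {l l' : List ℕ} (h : FiresU N x l y) (h' : FiresU N x l' z)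
    (hc : ∀ k, l.count k = l'.count k) : y = z :=
  Fires.counts_determine (fun h h' hne => enU_persist h h' hne)
    (fun h h' hne => unfire_comm h h' hne) h h' hc

/-- domination of counts implies reachability -/
lemma reach_of_counts {T a b : Finset ℕ} {la lb : List ℕ}
    (hla : FiresD N T la a) (hlb : FiresD N T lb b)
    (hc : ∀ k, la.count k ≤ lb.count k) : ∃ m, FiresD N a m b := by
  obtain ⟨γ, w, hγ, hcount⟩ := exchD hla hlb
  have hw : FiresD N T (la ++ γ) w := Fires.append hla hγ
  have hwb : w = b := by
    apply cdetD hw hlb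
    intro k
    rw [List.count_append]
    have h1 := hcount k
    have h2 := hc k
    omega
  exact ⟨γ, hwb ▸ hγ⟩

/-- additivity of counts along composed paths (by independence) -/
lemma counts_add {T a b : Finset ℕ} {la lb m : List ℕ}
    (hla : FiresD N T la a) (hlb : FiresD N T lb b) (hm : FiresD N a m b) :
    ∀ k, la.count k + m.count k = lb.count k := by
  intro k
  have := counts_independent (Fires.append hla hm) hlb k
  rw [List.count_append] at this
  exact this

/-! ### existence of the top and bottom elements -/

lemma exists_top (hN : 2 ≤ N) (hA : QuasiFib N A) (hne : (SRep A n).Nonempty) :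
    ∃ T ∈ SRep A n, ∀ a ∈ SRep A n, ∃ l, FiresD N T l a := by
  obtain ⟨a₀, ha₀⟩ := hne
  obtain ⟨T, l₀, hT0, hTS, hirr⟩ := up_nf hA hN a₀.card a₀ ha₀ le_rfl
  refine ⟨T, hTS, fun a ha => ?_⟩
  obtain ⟨Ta, la, hTa, hTaS, hirra⟩ := up_nf hA hN a.card a ha le_rfl
  have hEq : Ta = T :=
    zeck_unique hN hA n Ta T hTaS.1 hTS.1 (irr_noNCon hN hirra) (irr_noNCon hN hirr)
      hTaS.2 hTS.2
  rw [hEq] at hTa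
  exact ⟨la.reverse, firesU_reverse hTa⟩

lemma exists_bot (hN : 2 ≤ N) (hA : QuasiFib N A) {T : Finset ℕ} (hTS : T ∈ SRep A n)
    (hreach : ∀ a ∈ SRep A n, ∃ l, FiresD N T l a) :
    ∃ Bot ∈ SRep A n, ∀ a ∈ SRep A n, ∃ l, FiresD N a l Bot := by
  obtain ⟨Bot, lB, hlB, hBS, hBirr⟩ := down_nf hA hN (n - T.card) T hTS le_rfl
  refine ⟨Bot, hBS, fun a ha => ?_⟩
  obtain ⟨la, hla⟩ := hreach a ha
  obtain ⟨d, m, hm, hdS, hdirr⟩ := down_nf hA hN (n - a.card) a ha le_rfl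
  have had : FiresD N T (la ++ m) d := Fires.append hla hm
  obtain ⟨γ, w, hγ, hc1⟩ := exchD had hlB
  obtain ⟨δ, w', hδ, hc2⟩ := exchD hlB had
  have hγnil : γ = [] := by
    cases hγ with
    | nil => rfl
    | cons hk _ => exact absurd hk (hdirr _)
  have hδnil : δ = [] := by
    cases hδ with
    | nil => rfl
    | cons hk _ => exact absurd hk (hBirr _)
  subst hγnil hδnil
  have hdB : d = Bot := by
    apply cdetD had hlB
    intro k
    have h1 := hc1 k
    have h2 := hc2 k
    simp only [List.count_nil] at h1 h2
    omega
  exact ⟨m, hdB ▸ hm⟩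

/-! ### constructed meets and joins -/

lemma glb_construct {T a b : Finset ℕ} {la lb : List ℕ}
    (hla : FiresD N T la a) (hlb : FiresD N T lb b) :
    ∃ s ls, FiresD N T ls s ∧ (∀ k, ls.count k = max (la.count k) (lb.count k)) ∧
      (∃ m, FiresD N a m s) ∧ (∃ m, FiresD N b m s) := by
  obtain ⟨γ, w, hγ, hc⟩ := exchD hla hlb
  have hls : FiresD N T (la ++ γ) w := Fires.append hla hγ
  refine ⟨w, la ++ γ, hls, fun k => by rw [List.count_append]; exact hc k, ⟨γ, hγ⟩, ?_⟩
  apply reach_of_counts hlb hls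
  intro k
  rw [List.count_append]
  have := hc k
  omega

lemma lub_construct (hN : 2 ≤ N) (hA : QuasiFib N A)
    {T Bot a b : Finset ℕ} {l0 la lb ra rb : List ℕ}
    (ha : a ∈ SRep A n)
    (hreach : ∀ c ∈ SRep A n, ∃ l, FiresD N T l c)
    (hl0 : FiresD N T l0 Bot) (hla : FiresD N T la a) (hlb : FiresD N T lb b)
    (hra : FiresD N a ra Bot) (hrb : FiresD N b rb Bot) :
    ∃ s ls, FiresD N T ls s ∧ (∀ k, ls.count k = min (la.count k) (lb.count k)) ∧
      (∃ m, FiresD N s m a) ∧ (∃ m, FiresD N s m b) := by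
  have hua : FiresU N Bot ra.reverse a := firesD_reverse hra
  have hub : FiresU N Bot rb.reverse b := firesD_reverse hrb
  obtain ⟨γ, w, hγ, hc⟩ := exchU hua hub
  -- w is reachable from a upwards, hence in SRep
  have hwS : w ∈ SRep A n := firesU_srep hA (by omega) ha hγ
  obtain ⟨lw, hlw⟩ := hreach w hwS
  -- path from w down to Bot
  have hwBot : FiresD N w (ra.reverse ++ γ).reverse Bot :=
    firesU_reverse (Fires.append hua hγ)
  -- counts bookkeeping
  have hcw : ∀ k, lw.count k + ((ra.reverse ++ γ).reverse).count k = l0.count k :=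
    counts_add hlw hl0 hwBot
  have hcra : ∀ k, la.count k + ra.count k = l0.count k := counts_add hla hl0 hra
  have hcrb : ∀ k, lb.count k + rb.count k = l0.count k := counts_add hlb hl0 hrb
  have hlwmin : ∀ k, lw.count k = min (la.count k) (lb.count k) := by
    intro k
    have h1 := hcw k
    have h2 := hcra k
    have h3 := hcrb k
    have h4 := hc k
    rw [List.count_reverse, List.count_append, List.count_reverse] at h1
    rw [List.count_reverse, List.count_reverse] at h4
    omega
  refine ⟨w, lw, hlw, hlwmin, ⟨γ.reverse, firesU_reverse hγ⟩, ?_⟩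
  apply reach_of_counts hlw hlb
  intro k
  have := hlwmin k
  omega

/-! ### translation to `pge` -/

lemma pge_of_fires {a b : Finset ℕ} {l : List ℕ} (h : FiresD N a l b) : pge N a b :=
  pge_iff.mpr ⟨l, h⟩

end QF
open QF

theorem stmt_15 (N : ℕ) (hN : 2 ≤ N) (A : ℕ → ℕ) (hA : QuasiFib N A)
    (n : ℕ) (hn : 1 ≤ n) (hne : (SRep A n).Nonempty) :
    (∀ a ∈ SRep A n, pge N a a) ∧
    (∀ a ∈ SRep A n, ∀ b ∈ SRep A n, ∀ c ∈ SRep A n,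
      pge N a b → pge N b c → pge N a c) ∧
    (∀ a ∈ SRep A n, ∀ b ∈ SRep A n, pge N a b → pge N b a → a = b) ∧
    (∀ a ∈ SRep A n, ∀ b ∈ SRep A n, ∃ s, IsLUBin N (SRep A n) a b s) ∧
    (∀ a ∈ SRep A n, ∀ b ∈ SRep A n, ∃ s, IsGLBin N (SRep A n) a b s) ∧
    (∀ x ∈ SRep A n, ∀ y ∈ SRep A n, ∀ z ∈ SRep A n, pge N z x →
      ∀ m, IsGLBin N (SRep A n) y z m →
        ∀ u, IsLUBin N (SRep A n) x m u →
          ∀ j, IsLUBin N (SRep A n) x y j →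
            ∀ w, IsGLBin N (SRep A n) j z w → u = w) := by
  classical
  obtain ⟨T, hTS, hreach⟩ := exists_top hN hA hne
  obtain ⟨Bot, hBS, hbot⟩ := exists_bot hN hA hTS hreach
  obtain ⟨l0, hl0⟩ := hreach Bot hBS
  have hanti : ∀ a ∈ SRep A n, ∀ b ∈ SRep A n, pge N a b → pge N b a → a = b := by
    intro a ha b hb hab hba
    obtain ⟨la, hla⟩ := hreach a ha
    obtain ⟨lb, hlb⟩ := hreach b hb
    obtain ⟨m, hm⟩ := pge_iff.mp hab
    obtain ⟨m', hm'⟩ := pge_iff.mp hba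
    have h1 := counts_add hla hlb hm
    have h2 := counts_add hlb hla hm'
    cases hmnil : m with
    | nil => rw [hmnil] at hm; cases hm; rfl
    | cons k t =>
      have e1 := h1 k
      have e2 := h2 k
      rw [hmnil, List.count_cons_self] at e1
      omega
  have hglb : ∀ a ∈ SRep A n, ∀ b ∈ SRep A n, ∀ (la lb : List ℕ),
      FiresD N T la a → FiresD N T lb b →
      ∃ s ls, FiresD N T ls s ∧ (∀ k, ls.count k = max (la.count k) (lb.count k)) ∧
        IsGLBin N (SRep A n) a b s := by
    intro a ha b hb la lb hla hlb
    obtain ⟨s, ls, hls, hmax, ⟨ma, hma⟩, ⟨mb, hmb⟩⟩ := glb_construct hla hlb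
    refine ⟨s, ls, hls, hmax,
      firesD_srep hA (by omega) hTS hls, pge_of_fires hma, pge_of_fires hmb, ?_⟩
    intro c hc hca hcb
    obtain ⟨lc, hlc⟩ := hreach c hc
    obtain ⟨m1, hm1⟩ := pge_iff.mp hca
    obtain ⟨m2, hm2⟩ := pge_iff.mp hcb
    have h1 := counts_add hla hlc hm1
    have h2 := counts_add hlb hlc hm2
    obtain ⟨mm, hmm⟩ := reach_of_counts hls hlc (fun k => by
      have e0 := hmax k; have e1 := h1 k; have e2 := h2 k; omega)
    exact pge_of_fires hmm
  have hlub : ∀ a ∈ SRep A n, ∀ b ∈ SRep A n, ∀ (la lb : List ℕ),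
      FiresD N T la a → FiresD N T lb b →
      ∃ s ls, FiresD N T ls s ∧ (∀ k, ls.count k = min (la.count k) (lb.count k)) ∧
        IsLUBin N (SRep A n) a b s := by
    intro a ha b hb la lb hla hlb
    obtain ⟨ra, hra⟩ := hbot a ha
    obtain ⟨rb, hrb⟩ := hbot b hb
    obtain ⟨s, ls, hls, hmin, ⟨ma, hma⟩, ⟨mb, hmb⟩⟩ :=
      lub_construct hN hA ha hreach hl0 hla hlb hra hrb
    refine ⟨s, ls, hls, hmin,
      firesD_srep hA (by omega) hTS hls, pge_of_fires hma, pge_of_fires hmb, ?_⟩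
    intro c hc hca hcb
    obtain ⟨lc, hlc⟩ := hreach c hc
    obtain ⟨m1, hm1⟩ := pge_iff.mp hca
    obtain ⟨m2, hm2⟩ := pge_iff.mp hcb
    have h1 := counts_add hlc hla hm1
    have h2 := counts_add hlc hlb hm2
    obtain ⟨mm, hmm⟩ := reach_of_counts hlc hls (fun k => by
      have e0 := hmin k; have e1 := h1 k; have e2 := h2 k; omega)
    exact pge_of_fires hmm
  have hglb_counts : ∀ a ∈ SRep A n, ∀ b ∈ SRep A n, ∀ g, IsGLBin N (SRep A n) a b g →
      ∀ la lb, FiresD N T la a → FiresD N T lb b →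
      ∃ lg, FiresD N T lg g ∧ ∀ k, lg.count k = max (la.count k) (lb.count k) := by
    intro a ha b hb g hg la lb hla hlb
    obtain ⟨s, ls, hls, hmax, hsGLB⟩ := hglb a ha b hb la lb hla hlb
    have h1 : pge N g s := hg.2.2.2 s hsGLB.1 hsGLB.2.1 hsGLB.2.2.1
    have h2 : pge N s g := hsGLB.2.2.2 g hg.1 hg.2.1 hg.2.2.1
    have heq : s = g := hanti s hsGLB.1 g hg.1 h2 h1
    exact ⟨ls, heq ▸ hls, hmax⟩
  have hlub_counts : ∀ a ∈ SRep A n, ∀ b ∈ SRep A n, ∀ g, IsLUBin N (SRep A n) a b g →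
      ∀ la lb, FiresD N T la a → FiresD N T lb b →
      ∃ lg, FiresD N T lg g ∧ ∀ k, lg.count k = min (la.count k) (lb.count k) := by
    intro a ha b hb g hg la lb hla hlb
    obtain ⟨s, ls, hls, hmin, hsLUB⟩ := hlub a ha b hb la lb hla hlb
    have h1 : pge N g s := hsLUB.2.2.2 g hg.1 hg.2.1 hg.2.2.1
    have h2 : pge N s g := hg.2.2.2 s hsLUB.1 hsLUB.2.1 hsLUB.2.2.1
    have heq : s = g := hanti s hsLUB.1 g hg.1 h2 h1
    exact ⟨ls, heq ▸ hls, hmin⟩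
  refine ⟨fun a _ => Relation.ReflTransGen.refl,
    fun a _ b _ c _ hab hbc => hab.trans hbc,
    hanti, ?_, ?_, ?_⟩
  · intro a ha b hb
    obtain ⟨la, hla⟩ := hreach a ha
    obtain ⟨lb, hlb⟩ := hreach b hb
    obtain ⟨s, ls, _, _, hs⟩ := hlub a ha b hb la lb hla hlb
    exact ⟨s, hs⟩
  · intro a ha b hb
    obtain ⟨la, hla⟩ := hreach a ha
    obtain ⟨lb, hlb⟩ := hreach b hb
    obtain ⟨s, ls, _, _, hs⟩ := hglb a ha b hb la lb hla hlb
    exact ⟨s, hs⟩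
  · intro x hx y hy z hz hzx m hm u hu j hj w hw
    obtain ⟨lx, hlx⟩ := hreach x hx
    obtain ⟨ly, hly⟩ := hreach y hy
    obtain ⟨lz, hlz⟩ := hreach z hz
    obtain ⟨mzx, hmzx⟩ := pge_iff.mp hzx
    have hzxc := counts_add hlz hlx hmzx
    obtain ⟨lm, hlm, hlmc⟩ := hglb_counts y hy z hz m hm ly lz hly hlz
    obtain ⟨lu, hlu, hluc⟩ := hlub_counts x hx m hm.1 u hu lx lm hlx hlm
    obtain ⟨lj, hlj, hljc⟩ := hlub_counts x hx y hy j hj lx ly hlx hly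
    obtain ⟨lw, hlw, hlwc⟩ := hglb_counts j hj.1 z hz w hw lj lz hlj hlz
    apply cdetD hlu hlw
    intro k
    have e1 := hzxc k
    have e2 := hlmc k
    have e3 := hluc k
    have e4 := hljc k
    have e5 := hlwc k
    omega
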